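/- Let G be a connected corona graph (the corona of a connected graph H). Then the median adjacency eigenvalues of G satisfy −1 ≤ λ_L(G) < 0 < λ_H(G) ≤ 1. -/

import Mathlib

open scoped Classical

/-- The corona of a graph `H` on `Fin n`: each vertex `inl i` (a vertex `v_i` of `H`)
gets a new pendant neighbor `inr i` (the vertex `u_i`). -/
def corona {n : ℕ} (H : SimpleGraph (Fin n)) : SimpleGraph (Fin n ⊕ Fin n) where
  Adj x y :=
    match x, y with
    | .inl i, .inl j => H.Adj i j
    | .inl i, .inr j => i = j
    | .inr i, .inl j => i = j
    | .inr _, .inr _ => False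
  symm := by
    constructor
    rintro (i | i) (j | j) h
    · exact H.adj_symm h
    · exact h.symm
    · exact h.symm
    · exact h.elim
  loopless := by
    constructor
    rintro (i | i) h
    · exact H.irrefl h
    · exact h.elim

namespace CoronaAux

open Polynomial Matrix

noncomputable def lamP (d : ℝ) : ℝ := (d + Real.sqrt (d^2+4))/2
noncomputable def lamM (d : ℝ) : ℝ := (d - Real.sqrt (d^2+4))/2

lemma abs_lt_sqrt (d : ℝ) : |d| < Real.sqrt (d^2+4) := by
  have h : Real.sqrt (d^2) < Real.sqrt (d^2+4) :=
    Real.sqrt_lt_sqrt (sq_nonneg d) (by linarith)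
  rwa [Real.sqrt_sq_eq_abs] at h

lemma lamP_pos (d : ℝ) : 0 < lamP d := by
  have := abs_lt_sqrt d
  have := neg_abs_le d
  unfold lamP; linarith

lemma lamM_neg (d : ℝ) : lamM d < 0 := by
  have := abs_lt_sqrt d
  have := le_abs_self d
  unfold lamM; linarith

lemma lam_add (d : ℝ) : lamP d + lamM d = d := by unfold lamP lamM; ring

lemma lam_mul (d : ℝ) : lamP d * lamM d = -1 := by
  unfold lamP lamM
  have h : Real.sqrt (d^2+4) ^ 2 = d^2 + 4 := Real.sq_sqrt (by positivity)
  nlinarith [h]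

lemma lamP_le_one {d : ℝ} (hd : d ≤ 0) : lamP d ≤ 1 := by
  have h : Real.sqrt (d^2+4) ≤ 2 - d := by
    have h2 : Real.sqrt (d^2+4) ≤ Real.sqrt ((2-d)^2) :=
      Real.sqrt_le_sqrt (by nlinarith)
    rwa [Real.sqrt_sq_eq_abs, abs_of_nonneg (by linarith)] at h2
  unfold lamP; linarith

lemma neg_one_le_lamM {d : ℝ} (hd : 0 ≤ d) : -1 ≤ lamM d := by
  have h : Real.sqrt (d^2+4) ≤ 2 + d := by
    have h2 : Real.sqrt (d^2+4) ≤ Real.sqrt ((2+d)^2) :=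
      Real.sqrt_le_sqrt (by nlinarith)
    rwa [Real.sqrt_sq_eq_abs, abs_of_nonneg (by linarith)] at h2
  unfold lamM; linarith

lemma lam_factor (d : ℝ) :
    (X - C (lamP d)) * (X - C (lamM d)) = X^2 - C d * X - 1 := by
  have : (X - C (lamP d)) * (X - C (lamM d))
      = X^2 - C (lamP d + lamM d) * X + C (lamP d * lamM d) := by
    rw [C_add, C_mul]; ring
  rw [this, lam_add, lam_mul]
  simp; ring

variable {m : Type*} [Fintype m] [DecidableEq m]

lemma my_charpoly_conj (P Q M : Matrix m m ℝ) (hPQ : P * Q = 1) :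
    (P * M * Q).charpoly = M.charpoly := by
  have key : charmatrix (P * M * Q) =
      (C : ℝ →+* ℝ[X]).mapMatrix P * charmatrix M * (C : ℝ →+* ℝ[X]).mapMatrix Q := by
    unfold charmatrix
    rw [mul_sub, sub_mul]
    congr 1
    · have hcomm : (C : ℝ →+* ℝ[X]).mapMatrix P * Matrix.scalar m (X : ℝ[X])
          = Matrix.scalar m (X : ℝ[X]) * (C : ℝ →+* ℝ[X]).mapMatrix P := by
        rw [scalar_commute]
        intro r
        exact Commute.all _ _
      rw [hcomm, mul_assoc, ← _root_.map_mul, hPQ, _root_.map_one, mul_one]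
    · rw [← _root_.map_mul, ← _root_.map_mul]
  have hdet : ((C : ℝ →+* ℝ[X]).mapMatrix P).det * ((C : ℝ →+* ℝ[X]).mapMatrix Q).det = 1 := by
    rw [← det_mul, ← _root_.map_mul, hPQ, _root_.map_one, det_one]
  unfold Matrix.charpoly
  rw [key, det_mul, det_mul, mul_right_comm, hdet, one_mul]

lemma my_charpoly_diagonal (d : m → ℝ) :
    (Matrix.diagonal d).charpoly = ∏ i, (X - C (d i)) := by
  have h : charmatrix (Matrix.diagonal d) = Matrix.diagonal (fun i => X - C (d i)) := by
    ext i j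
    by_cases hij : i = j
    · subst hij; simp [charmatrix_apply_eq]
    · simp [charmatrix_apply_ne _ _ _ hij, Matrix.diagonal_apply_ne _ hij]
  unfold Matrix.charpoly
  rw [h, det_diagonal]

lemma ofReal_diag (d : m → ℝ) : Matrix.diagonal ((RCLike.ofReal : ℝ → ℝ) ∘ d)
    = Matrix.diagonal d := by congr 1

lemma my_hermitian_charpoly (M : Matrix m m ℝ) (hM : M.IsHermitian) :
    M.charpoly = ∏ i, (X - C (hM.eigenvalues i)) := by
  have hst := hM.spectral_theorem
  have h1 : (hM.eigenvectorUnitary : Matrix m m ℝ) * (star hM.eigenvectorUnitary : Matrix m m ℝ)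
      = 1 := (Matrix.mem_unitaryGroup_iff).mp hM.eigenvectorUnitary.2
  calc M.charpoly
      = ((hM.eigenvectorUnitary : Matrix m m ℝ) * Matrix.diagonal hM.eigenvalues
        * (star hM.eigenvectorUnitary : Matrix m m ℝ)).charpoly := by
        conv_lhs => rw [hst]
        rw [ofReal_diag, Unitary.conjStarAlgAut_apply]
    _ = (Matrix.diagonal hM.eigenvalues).charpoly := my_charpoly_conj _ _ _ h1
    _ = ∏ i, (X - C (hM.eigenvalues i)) := my_charpoly_diagonal _

lemma my_sum_eigenvalues (M : Matrix m m ℝ) (hM : M.IsHermitian) :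
    ∑ i, hM.eigenvalues i = M.trace := by
  have hst := hM.spectral_theorem
  have h1 : (star hM.eigenvectorUnitary : Matrix m m ℝ) * (hM.eigenvectorUnitary : Matrix m m ℝ)
      = 1 := (Matrix.mem_unitaryGroup_iff').mp hM.eigenvectorUnitary.2
  conv_rhs => rw [hst, ofReal_diag, Unitary.conjStarAlgAut_apply]
  rw [Matrix.trace_mul_comm, ← mul_assoc, h1, one_mul, Matrix.trace_diagonal]

def mySigma (n : ℕ) : (Fin n ⊕ Fin n) ≃ (Fin 2 × Fin n) where
  toFun x := match x with | .inl i => (0, i) | .inr i => (1, i)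
  invFun p := if p.1 = 0 then .inl p.2 else .inr p.2
  left_inv := by rintro (i | i) <;> simp
  right_inv := by rintro ⟨a, i⟩; fin_cases a <;> simp

lemma my_charpoly_corona_diag {n : ℕ} (d : Fin n → ℝ) :
    (fromBlocks (diagonal d) 1 1 0 : Matrix (Fin n ⊕ Fin n) (Fin n ⊕ Fin n) ℝ).charpoly
      = ∏ i, (X^2 - C (d i) * X - 1) := by
  set f : Fin n → Matrix (Fin 2) (Fin 2) ℝ := fun i => !![d i, 1; 1, 0] with hf
  have hM : (fromBlocks (diagonal d) 1 1 0 : Matrix (Fin n ⊕ Fin n) (Fin n ⊕ Fin n) ℝ)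
      = (blockDiagonal f).submatrix (mySigma n) (mySigma n) := by
    ext x y
    rcases x with i | i <;> rcases y with j | j <;>
      by_cases hij : i = j <;>
      simp [hf, mySigma, blockDiagonal_apply, diagonal_apply, one_apply, hij, fromBlocks]
  have hre : (blockDiagonal f).submatrix (mySigma n) (mySigma n)
      = reindex (mySigma n).symm (mySigma n).symm (blockDiagonal f) := by
    simp [reindex_apply]
  rw [hM, hre, Matrix.charpoly_reindex]
  have h2 : (blockDiagonal f).charpoly = ∏ i, (f i).charpoly := by
    have h : charmatrix (blockDiagonal f) = blockDiagonal (fun i => charmatrix (f i)) := by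
      ext ⟨a, i⟩ ⟨b, j⟩
      by_cases hij : i = j
      · subst hij
        by_cases hab : a = b
        · subst hab; simp [charmatrix_apply, blockDiagonal_apply, diagonal_apply]
        · simp [charmatrix_apply, blockDiagonal_apply, diagonal_apply, hab, Prod.ext_iff]
      · simp [charmatrix_apply, blockDiagonal_apply, diagonal_apply, hij, Prod.ext_iff]
    unfold Matrix.charpoly
    rw [h, det_blockDiagonal]
  rw [h2]
  apply Finset.prod_congr rfl
  intro i _
  show (!![d i, 1; 1, 0] : Matrix (Fin 2) (Fin 2) ℝ).charpoly = _
  unfold Matrix.charpoly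
  rw [det_fin_two]
  simp [charmatrix_apply, diagonal_apply]
  ring

end CoronaAux

open Polynomial Matrix CoronaAux

theorem corona_median_eigenvalues
    {n : ℕ} (hn : 0 < n) (H : SimpleGraph (Fin n)) (hH : H.Connected)
    (A : Matrix (Fin n ⊕ Fin n) (Fin n ⊕ Fin n) ℝ)
    (hAdef : A = Matrix.of fun x y => if (corona H).Adj x y then (1 : ℝ) else 0)
    (hA : A.IsHermitian) :
    Nat.card {x // 0 < hA.eigenvalues x} = n ∧
    Nat.card {x // hA.eigenvalues x < 0} = n ∧
    (∃ x, 0 < hA.eigenvalues x ∧ hA.eigenvalues x ≤ 1) ∧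
    (∃ x, hA.eigenvalues x < 0 ∧ -1 ≤ hA.eigenvalues x) := by
  set B : Matrix (Fin n) (Fin n) ℝ := Matrix.of fun i j => if H.Adj i j then (1 : ℝ) else 0
    with hBdef
  have hB : B.IsHermitian := by
    show Bᴴ = B
    ext i j
    simp [hBdef, Matrix.conjTranspose_apply, SimpleGraph.adj_comm]
  set d : Fin n → ℝ := hB.eigenvalues with hd
  set e : Fin n ⊕ Fin n → ℝ := hA.eigenvalues with he
  -- A as a block matrix
  have hAB : A = fromBlocks B 1 1 0 := by
    rw [hAdef]
    ext x y
    rcases x with i | i <;> rcases y with j | j <;>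
      simp [corona, fromBlocks, hBdef, Matrix.one_apply, eq_comm] <;> congr 1
  -- spectral data of B
  set Q : Matrix (Fin n) (Fin n) ℝ := (hB.eigenvectorUnitary : Matrix (Fin n) (Fin n) ℝ)
    with hQ
  have hQ1 : Q * star Q = 1 := (Matrix.mem_unitaryGroup_iff).mp hB.eigenvectorUnitary.2
  have hQB : Q * diagonal d * star Q = B := by
    conv_rhs => rw [hB.spectral_theorem, ofReal_diag, Unitary.conjStarAlgAut_apply]
  -- conjugate A to the diagonal block form
  set U : Matrix (Fin n ⊕ Fin n) (Fin n ⊕ Fin n) ℝ := fromBlocks Q 0 0 Q with hU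
  set V : Matrix (Fin n ⊕ Fin n) (Fin n ⊕ Fin n) ℝ :=
    fromBlocks (star Q) 0 0 (star Q) with hV
  have hUV : U * V = 1 := by
    rw [hU, hV, fromBlocks_multiply]
    simp [hQ1, fromBlocks_one]
  have hQB' : Q * (diagonal d * star Q) = B := by rw [← mul_assoc]; exact hQB
  have hAUMV : A = U * (fromBlocks (diagonal d) 1 1 0) * V := by
    rw [hU, hV, fromBlocks_multiply, fromBlocks_multiply]
    simp only [Matrix.mul_zero, Matrix.zero_mul, Matrix.mul_one, Matrix.one_mul,
      add_zero, zero_add, Matrix.mul_assoc]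
    rw [hAB, hQB', hQ1]
  have hcharA : A.charpoly = ∏ i, (X^2 - C (d i) * X - 1) := by
    rw [hAUMV, my_charpoly_conj _ _ _ hUV, my_charpoly_corona_diag]
  have hcharE : A.charpoly = ∏ x, (X - C (e x)) := my_hermitian_charpoly A hA
  -- multiset of eigenvalues
  set s : Multiset ℝ := Finset.univ.val.map e with hs
  set t : Multiset ℝ := Finset.univ.val.map (fun i => lamP (d i))
    + Finset.univ.val.map (fun i => lamM (d i)) with ht
  have hps : (s.map fun r => X - C r).prod = A.charpoly := by
    rw [hs, Multiset.map_map, hcharE]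
    rfl
  have hpt : (t.map fun r => X - C r).prod = A.charpoly := by
    rw [ht, Multiset.map_add, Multiset.prod_add, Multiset.map_map, Multiset.map_map, hcharA]
    have h1 : (Finset.univ.val.map fun i => X - C (lamP (d i))).prod
        = ∏ i, (X - C (lamP (d i))) := rfl
    have h2 : (Finset.univ.val.map fun i => X - C (lamM (d i))).prod
        = ∏ i, (X - C (lamM (d i))) := rfl
    show (Finset.univ.val.map fun i => X - C (lamP (d i))).prod
        * (Finset.univ.val.map fun i => X - C (lamM (d i))).prod = _
    rw [h1, h2, ← Finset.prod_mul_distrib]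
    exact Finset.prod_congr rfl fun i _ => lam_factor (d i)
  have hst : s = t := by
    rw [← Polynomial.roots_multiset_prod_X_sub_C s, ← Polynomial.roots_multiset_prod_X_sub_C t,
      hps, hpt]
  -- counting
  have hcount : ∀ p : ℝ → Prop, Nat.card {x // p (e x)} = Multiset.countP p s := by
    intro p
    rw [Nat.card_eq_fintype_card, Fintype.card_subtype, hs, Multiset.countP_map,
      ← Finset.filter_val]
    rfl
  have hcountP : Multiset.countP (fun r => 0 < r) t = n := by
    rw [ht, Multiset.countP_add, Multiset.countP_map, Multiset.countP_map]
    rw [Multiset.filter_eq_self.mpr (fun i _ => lamP_pos (d i)),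
      Multiset.filter_eq_nil.mpr (fun i _ => asymm (lamM_neg (d i)))]
    simp
  have hcountN : Multiset.countP (fun r => r < 0) t = n := by
    rw [ht, Multiset.countP_add, Multiset.countP_map, Multiset.countP_map]
    rw [Multiset.filter_eq_nil.mpr (fun i _ => asymm (lamP_pos (d i))),
      Multiset.filter_eq_self.mpr (fun i _ => lamM_neg (d i))]
    simp
  refine ⟨?_, ?_, ?_, ?_⟩
  · exact (hcount (fun r => 0 < r)).trans (by rw [hst]; exact hcountP)
  · exact (hcount (fun r => r < 0)).trans (by rw [hst]; exact hcountN)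
  · -- exists eigenvalue in (0, 1]
    have htr : ∑ i, d i = 0 := by
      rw [hd, my_sum_eigenvalues B hB]
      simp [hBdef, Matrix.trace, Matrix.diag]
    have hex : ∃ i, d i ≤ 0 := by
      by_contra h
      push_neg at h
      have : (0:ℝ) < ∑ i, d i :=
        Finset.sum_pos (fun i _ => h i) (Finset.univ_nonempty_iff.mpr ⟨⟨0, hn⟩⟩)
      rw [htr] at this; exact lt_irrefl _ this
    obtain ⟨i, hi⟩ := hex
    have hmem : lamP (d i) ∈ t := by
      rw [ht]
      exact Multiset.mem_add.mpr (Or.inl (Multiset.mem_map.mpr ⟨i, Finset.mem_univ i, rfl⟩))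
    rw [← hst, hs] at hmem
    obtain ⟨x, _, hx⟩ := Multiset.mem_map.mp hmem
    exact ⟨x, by rw [hx]; exact lamP_pos _, by rw [hx]; exact lamP_le_one hi⟩
  · have htr : ∑ i, d i = 0 := by
      rw [hd, my_sum_eigenvalues B hB]
      simp [hBdef, Matrix.trace, Matrix.diag]
    have hex : ∃ i, 0 ≤ d i := by
      by_contra h
      push_neg at h
      have : ∑ i, d i < 0 :=
        Finset.sum_neg (fun i _ => h i) (Finset.univ_nonempty_iff.mpr ⟨⟨0, hn⟩⟩)
      rw [htr] at this; exact lt_irrefl _ this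
    obtain ⟨i, hi⟩ := hex
    have hmem : lamM (d i) ∈ t := by
      rw [ht]
      exact Multiset.mem_add.mpr (Or.inr (Multiset.mem_map.mpr ⟨i, Finset.mem_univ i, rfl⟩))
    rw [← hst, hs] at hmem
    obtain ⟨x, _, hx⟩ := Multiset.mem_map.mp hmem
    exact ⟨x, by rw [hx]; exact lamM_neg _, by rw [hx]; exact neg_one_le_lamM hi⟩
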